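/- Let M be a monoid satisfying both x·s·x·t = x·s·x·t·x and (x·y)² = x²·y² for all x, y, s, t ∈ M. Let w be a word over an alphabet A in which every letter that occurs at all occurs at least twice. Then for every f : A → M, the evaluation of w in M equals the evaluation of ini²(w), where ini²(w) is obtained from ini(w) by replacing each letter x by x². -/

import Mathlib

/-- `ini w` is the word obtained from `w` by retaining only the first
occurrence of each letter. -/
def ini {A : Type} [DecidableEq A] : List A → List A
  | [] => []
  | a :: l => a :: ini (l.filter (· ≠ a))
termination_by w => w.length
decreasing_by
  simp only [List.length_cons]
  exact Nat.lt_succ_of_le (by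
    simp only [List.length_unattach]
    exact (List.length_filter_le _ _).trans (le_of_eq List.length_attach))

/-- `iniSq w` is the word `ini²(w)`, obtained from `ini w` by replacing each
letter `x` by `xx`. -/
def iniSq {A : Type} [DecidableEq A] (w : List A) : List A :=
  (ini w).flatMap (fun a => [a, a])

theorem ini_nil {A : Type} [DecidableEq A] : ini ([] : List A) = [] := by rw [ini]

theorem ini_cons {A : Type} [DecidableEq A] (a : A) (l : List A) :
    ini (a :: l) = a :: ini (l.filter (· ≠ a)) := by rw [ini]

section Aux

variable {A : Type} [DecidableEq A] {M : Type*} [Monoid M]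

/-- If a letter occurs at least twice in `P`, then `eval P` absorbs that letter. -/
theorem absorb_letter (h1 : ∀ x s t : M, x * s * x * t = x * s * x * t * x) (f : A → M) :
    ∀ (P : List A) (b : A), 2 ≤ P.count b →
    ((P.map f).prod * f b = (P.map f).prod) := by
  intro P
  induction P with
  | nil => intro b hb; simp [List.count_nil] at hb
  | cons c P2 IH =>
    intro b hb
    by_cases hcb : c = b
    · subst hcb
      have h1mem : 1 ≤ P2.count c := by
        rw [List.count_cons_self] at hb; omega
      have hc : c ∈ P2 := by
        by_contra h
        rw [List.count_eq_zero_of_not_mem h] at h1mem; omega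
      obtain ⟨Q1, Q2, rfl⟩ := List.append_of_mem hc
      simp only [List.map_cons, List.map_append, List.prod_cons, List.prod_append]
      have := h1 (f c) ((Q1.map f).prod) ((Q2.map f).prod)
      simp only [mul_assoc] at this ⊢
      exact this.symm
    · have hb2 : 2 ≤ P2.count b := by
        rwa [List.count_cons_of_ne hcb] at hb
      simp only [List.map_cons, List.prod_cons, mul_assoc, IH b hb2]

/-- If every letter of `z` occurs at least twice in `P`, then `eval P` absorbs `eval z`. -/
theorem absorb_list (h1 : ∀ x s t : M, x * s * x * t = x * s * x * t * x) (f : A → M) :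
    ∀ (z P : List A), (∀ b ∈ z, 2 ≤ P.count b) →
    ((P.map f).prod * (z.map f).prod = (P.map f).prod) := by
  intro z
  induction z with
  | nil => intro P _; simp
  | cons c z2 IH =>
    intro P hz
    simp only [List.map_cons, List.prod_cons, ← mul_assoc]
    rw [absorb_letter h1 f P c (hz c List.mem_cons_self)]
    exact IH P (fun b hb => hz b (List.mem_cons_of_mem _ hb))

omit [DecidableEq A] in
/-- The square of the evaluation of `v` equals the evaluation of `v` with
every letter doubled in place. -/
theorem sq_distrib (h2 : ∀ x y : M, (x * y) ^ 2 = x ^ 2 * y ^ 2) (f : A → M) :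
    ∀ v : List A,
    ((v.map f).prod) ^ 2 = ((v.flatMap (fun b => [b, b])).map f).prod := by
  intro v
  induction v with
  | nil => simp
  | cons c t IH =>
    simp only [List.map_cons, List.prod_cons, List.flatMap_cons, List.map_append,
      List.prod_append]
    rw [h2, ← IH]
    simp [pow_two, mul_assoc]

/-- Deleting all doubled occurrences of `b` from `flatMap double t` after a prefix `P`
containing `b` twice. -/
theorem delete_letter (h1 : ∀ x s t : M, x * s * x * t = x * s * x * t * x) (f : A → M)
    (b : A) : ∀ (t P : List A), 2 ≤ P.count b →
    (((P ++ t.flatMap (fun b => [b, b])).map f).prod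
      = ((P ++ (t.filter (· ≠ b)).flatMap (fun b => [b, b])).map f).prod) := by
  intro t
  induction t with
  | nil => intro P _; rfl
  | cons c t2 IH =>
    intro P hP
    by_cases hcb : c = b
    · subst hcb
      rw [List.filter_cons_of_neg (by simp)]
      have key : ((P ++ (c :: t2).flatMap (fun b => [b, b])).map f).prod
          = (((P ++ [c, c]) ++ t2.flatMap (fun b => [b, b])).map f).prod := by
        simp [List.flatMap_cons, List.append_assoc]
      rw [key]
      have habs : (((P ++ [c, c]).map f).prod) = ((P.map f).prod) := by
        simp only [List.map_append, List.prod_append]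
        exact absorb_list h1 f [c, c] P (by intro b hb; simp at hb; subst hb; exact hP)
      have h2c : 2 ≤ (P ++ [c, c]).count c := by
        simp [List.count_append]
      rw [IH (P ++ [c, c]) h2c]
      simp only [List.map_append, List.prod_append, ← mul_assoc] at *
      rw [habs]
    · rw [List.filter_cons_of_pos (by simp [hcb])]
      have key : ∀ s : List A, ((P ++ (c :: s).flatMap (fun b => [b, b])).map f).prod
          = (((P ++ [c, c]) ++ s.flatMap (fun b => [b, b])).map f).prod := by
        intro s; simp [List.flatMap_cons, List.append_assoc]
      rw [key, key]
      have h2b : 2 ≤ (P ++ [c, c]).count b := by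
        simp only [List.count_append]
        have : ([c, c] : List A).count b = 0 := by
          simp [List.count_cons, hcb]
        omega
      exact IH (P ++ [c, c]) h2b

/-- Deduplication: after a prefix, `flatMap double v` evaluates the same as
`flatMap double (ini v)`. -/
theorem dedup (h1 : ∀ x s t : M, x * s * x * t = x * s * x * t * x) (f : A → M) :
    ∀ (v P : List A),
    ((P ++ v.flatMap (fun b => [b, b])).map f).prod
      = ((P ++ (ini v).flatMap (fun b => [b, b])).map f).prod
  | [], P => by rw [ini_nil]
  | b :: t, P => by
    rw [ini_cons]
    have key : ∀ s : List A, ((P ++ (b :: s).flatMap (fun c => [c, c])).map f).prod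
        = (((P ++ [b, b]) ++ s.flatMap (fun c => [c, c])).map f).prod := by
      intro s; simp [List.flatMap_cons, List.append_assoc]
    rw [key, key]
    have h2b : 2 ≤ (P ++ [b, b]).count b := by simp [List.count_append]
    rw [delete_letter h1 f b t (P ++ [b, b]) h2b]
    exact dedup h1 f (t.filter (· ≠ b)) (P ++ [b, b])
termination_by v => v.length
decreasing_by
  simp only [List.length_cons]
  exact Nat.lt_succ_of_le (List.length_filter_le _ _)

end Aux

theorem stmt4 {A : Type} [DecidableEq A] {M : Type*} [Monoid M]
    (h1 : ∀ x s t : M, x * s * x * t = x * s * x * t * x)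
    (h2 : ∀ x y : M, (x * y) ^ 2 = x ^ 2 * y ^ 2)
    (w : List A) (hw : ∀ a ∈ w, 2 ≤ w.count a) (f : A → M) :
    (w.map f).prod = ((iniSq w).map f).prod := by
  have step1 : (w.map f).prod = ((w.map f).prod) ^ 2 := by
    rw [pow_two]
    exact (absorb_list h1 f w w hw).symm
  rw [step1, sq_distrib h2 f w]
  have := dedup h1 f w []
  simpa [iniSq] using this
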